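/- Let K be a field of characteristic 0 and n ≥ 1. For any X ∈ Matₙ(K) and any t ∈ K, the bilinear multiplication μ on Matₙ(K) defined by μ(a,b) = a·b + t·(tr b)·(X·a − a·X) satisfies the right-symmetric identity: μ(μ(a,b),c) − μ(a,μ(b,c)) = μ(μ(a,c),b) − μ(a,μ(c,b)) for all a,b,c ∈ Matₙ(K). Thus the matrix algebra glₙ admits the nontrivial one-parameter family of right-symmetric deformations (a,b) ↦ a∘b + t·(tr b)·[X,a]. -/
import Mathlib


/-- The deformed multiplication `μ(a,b) = a·b + t·(tr b)·[X,a]` on `glₙ`. -/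
def glDefMul {K : Type*} [Field K] (n : ℕ) (X : Matrix (Fin n) (Fin n) K) (t : K)
    (a b : Matrix (Fin n) (Fin n) K) : Matrix (Fin n) (Fin n) K :=
  a * b + (t * b.trace) • (X * a - a * X)

/-- Over a field of characteristic 0, for any `X ∈ Matₙ(K)` and `t ∈ K`, the
multiplication `μ(a,b) = a·b + t·(tr b)·[X,a]` is right-symmetric; thus `glₙ`
admits a one-parameter family of right-symmetric deformations. -/
theorem glDefMul_rightSymmetric
    {K : Type*} [Field K] [CharZero K] (n : ℕ) (hn : 1 ≤ n)
    (X : Matrix (Fin n) (Fin n) K) (t : K) :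
    ∀ a b c : Matrix (Fin n) (Fin n) K,
      glDefMul n X t (glDefMul n X t a b) c - glDefMul n X t a (glDefMul n X t b c)
        = glDefMul n X t (glDefMul n X t a c) b
          - glDefMul n X t a (glDefMul n X t c b) := by
  intro a b c
  simp only [glDefMul, Matrix.trace_add, Matrix.trace_smul, Matrix.trace_sub,
    Matrix.trace_mul_comm b, Matrix.trace_mul_comm c X, smul_eq_mul]
  simp only [sub_self, mul_zero, add_zero, zero_add]
  simp only [mul_add, add_mul, smul_sub, smul_add, mul_sub, sub_mul, Matrix.mul_smul,
    Matrix.smul_mul, smul_smul, mul_assoc]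
  ring_nf
  abel
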